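/- Let A be a commutative von Neumann regular ring. Then the socle of A equals the intersection of all non-isolated prime ideals: sA = ⋂ {P ∈ Spec(A) : P is not isolated in Spec(A)}. -/

import Mathlib

open Ordinal

/-- The socle of a commutative ring: the sum of all simple ideals. -/
def socleIdeal (A : Type*) [CommRing A] : Ideal A :=
  sSup {I : Ideal A | IsSimpleModule A I}

section aux

variable {A : Type*} [CommRing A]

open PrimeSpectrum Ideal

lemma idem_eq_zero_of_nilpotent {e : A} (he : IsIdempotentElem e)
    (hn : IsNilpotent e) : e = 0 := by
  obtain ⟨n, hn⟩ := hn
  cases n with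
  | zero =>
    have h1 : (1 : A) = 0 := by simpa using hn
    calc e = e * 1 := (mul_one e).symm
    _ = 0 := by rw [h1, mul_zero]
  | succ n => rw [he.pow_succ_eq] at hn; exact hn

lemma exists_idem_span (hA : ∀ a : A, ∃ x, a * x * a = a) (a : A) :
    ∃ e : A, IsIdempotentElem e ∧ Ideal.span {a} = Ideal.span {e} := by
  obtain ⟨x, hx⟩ := hA a
  refine ⟨a * x, ?_, ?_⟩
  · show a * x * (a * x) = a * x
    calc a * x * (a * x) = (a * x * a) * x := by ring
    _ = a * x := by rw [hx]
  · apply le_antisymm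
    · rw [Ideal.span_singleton_le_iff_mem]
      refine Ideal.mem_span_singleton'.mpr ⟨a, ?_⟩
      calc a * (a * x) = a * x * a := by ring
      _ = a := hx
    · rw [Ideal.span_singleton_le_iff_mem]
      exact Ideal.mem_span_singleton'.mpr ⟨x, by ring⟩

lemma prime_isMaximal (hA : ∀ a : A, ∃ x, a * x * a = a) (P : Ideal A)
    (hP : P.IsPrime) : P.IsMaximal := by
  rw [Ideal.isMaximal_iff]
  refine ⟨fun h => hP.ne_top (Ideal.eq_top_iff_one P |>.mpr h), ?_⟩
  intro J b hPJ hbP hbJ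
  obtain ⟨x, hx⟩ := hA b
  have h0 : b * (x * b - 1) ∈ P := by
    have : b * (x * b - 1) = b * x * b - b := by ring
    rw [this, hx]; simpa using P.zero_mem
  have hxb : x * b - 1 ∈ P := ((hP.mem_or_mem h0).resolve_left hbP)
  have : (1 : A) = x * b - (x * b - 1) := by ring
  rw [this]
  exact J.sub_mem (J.mul_mem_left x hbJ) (hPJ hxb)

lemma basicOpen_isClosed {e : A} (he : IsIdempotentElem e) :
    IsClosed (basicOpen e : Set (PrimeSpectrum A)) := by
  have h : (basicOpen e : Set (PrimeSpectrum A)) = zeroLocus {1 - e} := by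
    ext Q
    simp only [SetLike.mem_coe, mem_basicOpen, mem_zeroLocus, Set.singleton_subset_iff,
      SetLike.mem_coe]
    constructor
    · intro heQ
      have h0 : e * (1 - e) ∈ Q.asIdeal := by
        have : e * (1 - e) = e - e * e := by ring
        rw [this, he]; simpa using Q.asIdeal.zero_mem
      exact (Q.2.mem_or_mem h0).resolve_left heQ
    · intro h1 heQ
      exact Q.2.ne_top (Ideal.eq_top_iff_one _ |>.mpr (by
        have : (1 : A) = (1 - e) + e := by ring
        rw [this]; exact Q.asIdeal.add_mem h1 heQ))
  rw [h]
  exact isClosed_zeroLocus _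

lemma one_sub_mem_of_not_mem {e : A} (he : IsIdempotentElem e)
    {P : Ideal A} (hP : P.IsPrime) (h : e ∉ P) : 1 - e ∈ P := by
  have h0 : e * (1 - e) ∈ P := by
    have : e * (1 - e) = e - e * e := by ring
    rw [this, he]; simpa using P.zero_mem
  exact (hP.mem_or_mem h0).resolve_left h

lemma isAtom_span_of_basicOpen_singleton (hA : ∀ a : A, ∃ x, a * x * a = a)
    {e : A} (he : IsIdempotentElem e) (P : PrimeSpectrum A)
    (hP : (basicOpen e : Set (PrimeSpectrum A)) = {P}) :
    IsAtom (Ideal.span {e} : Ideal A) := by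
  constructor
  · intro h0
    have he0 : e = 0 := by simpa [Ideal.span_singleton_eq_bot] using h0
    rw [he0, basicOpen_zero] at hP
    exact Set.singleton_ne_empty P (by simpa using hP.symm)
  · intro J hJ
    by_contra hJ0
    obtain ⟨b, hbJ, hb0⟩ := Submodule.exists_mem_ne_zero_of_ne_bot hJ0
    obtain ⟨x, hx⟩ := hA b
    set f := b * x with hf_def
    have hfJ : f ∈ J := J.mul_mem_right x hbJ
    have hf : IsIdempotentElem f := by
      show b * x * (b * x) = b * x
      calc b * x * (b * x) = (b * x * b) * x := by ring
      _ = b * x := by rw [hx]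
    have hbe : b * e = b := by
      obtain ⟨c, hc⟩ := Ideal.mem_span_singleton'.mp (hJ.le hbJ)
      calc b * e = c * e * e := by rw [← hc]
      _ = c * (e * e) := by ring
      _ = c * e := by rw [he]
      _ = b := hc
    have hfe : f * e = f := by
      calc f * e = (b * e) * x := by rw [hf_def]; ring
      _ = f := by rw [hbe]
    have hf0 : f ≠ 0 := by
      intro h
      apply hb0
      calc b = b * x * b := hx.symm
      _ = 0 := by rw [← hf_def, h, zero_mul]
    have key : e * (1 - f) = 0 := by
      apply idem_eq_zero_of_nilpotent
      · show e * (1 - f) * (e * (1 - f)) = e * (1 - f)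
        calc e * (1 - f) * (e * (1 - f)) = (e * e) * ((1 - f) * (1 - f)) := by ring
        _ = e * (1 - f) := by rw [he, hf.one_sub]
      · rw [← mem_nilradical, nilradical_eq_sInf, Ideal.mem_sInf]
        intro Q hQ
        by_cases heQ : e ∈ Q
        · exact Q.mul_mem_right _ heQ
        · -- Q is a prime not containing e, so as a point of Spec it equals P
          have hQP : (⟨Q, hQ⟩ : PrimeSpectrum A) = P := by
            have : (⟨Q, hQ⟩ : PrimeSpectrum A) ∈ (basicOpen e : Set (PrimeSpectrum A)) :=
              (mem_basicOpen e _).mpr heQ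
            rw [hP] at this
            exact this
          -- f ∉ P : basicOpen f is nonempty and contained in {P}
          have hfP : f ∉ P.asIdeal := by
            have hfnil : ¬ IsNilpotent f := fun h => hf0 (idem_eq_zero_of_nilpotent hf h)
            have hbo : basicOpen f ≠ ⊥ := fun h => hfnil ((basicOpen_eq_bot_iff f).mp h)
            obtain ⟨R, hR⟩ := (TopologicalSpace.Opens.ne_bot_iff_nonempty _).mp hbo
            have hRf : f ∉ R.asIdeal := hR
            have hRe : R ∈ (basicOpen e : Set (PrimeSpectrum A)) := by
              rw [SetLike.mem_coe, mem_basicOpen]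
              intro heR
              exact hRf (hfe ▸ R.asIdeal.mul_mem_left f heR)
            rw [hP] at hRe
            rw [← hRe]
            exact hR
          have h1f : 1 - f ∈ P.asIdeal := one_sub_mem_of_not_mem hf P.2 hfP
          have : e * (1 - f) ∈ P.asIdeal := P.asIdeal.mul_mem_left e h1f
          rw [← hQP] at this
          exact this
    have hef : e = e * f := by
      have h' : e - e * f = 0 := by rw [← key]; ring
      exact sub_eq_zero.mp h'
    have heJ : e ∈ J := by rw [hef]; exact J.mul_mem_left e hfJ
    exact hJ.2 ((Ideal.span_singleton_le_iff_mem _).mpr heJ)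

lemma one_sub_prod_mem {ι : Type*} (s : Finset ι) (g : ι → A) (K : Ideal A)
    (h : ∀ i ∈ s, g i ∈ K) : 1 - ∏ i ∈ s, (1 - g i) ∈ K := by
  classical
  induction s using Finset.induction_on with
  | empty => simpa using K.zero_mem
  | insert _ _ ha ih =>
    rename_i a s
    rw [Finset.prod_insert ha]
    have heq : 1 - (1 - g a) * ∏ i ∈ s, (1 - g i) =
        g a * (∏ i ∈ s, (1 - g i)) + (1 - ∏ i ∈ s, (1 - g i)) := by ring
    rw [heq]
    exact K.add_mem (K.mul_mem_right _ (h a (Finset.mem_insert_self a s)))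
      (ih fun i hi => h i (Finset.mem_insert_of_mem hi))

end aux

open PrimeSpectrum

/-- The socle of a commutative von Neumann regular ring equals the
intersection of all non-isolated primes. -/
theorem stmt7 (A : Type*) [CommRing A] (hA : ∀ a : A, ∃ x, a * x * a = a) :
    socleIdeal A =
      ⨅ (P : PrimeSpectrum A) (_ : ¬ IsOpen ({P} : Set (PrimeSpectrum A))),
        P.asIdeal := by
  classical
  apply le_antisymm
  · refine sSup_le fun I hI => le_iInf fun P => le_iInf fun hP => ?_
    have hIatom : IsAtom I := isSimpleModule_iff_isAtom.mp hI
    obtain ⟨a, haI, ha0⟩ := Submodule.exists_mem_ne_zero_of_ne_bot hIatom.1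
    obtain ⟨e, he, hspan⟩ := exists_idem_span hA a
    have heI : Ideal.span {e} ≤ I := hspan ▸ (Ideal.span_singleton_le_iff_mem _).mpr haI
    have hne : Ideal.span {e} ≠ ⊥ := by
      rw [← hspan]
      intro h
      exact ha0 (by simpa [Ideal.span_singleton_eq_bot] using h)
    have heqI : Ideal.span {e} = I := by
      rcases heI.lt_or_eq with h | h
      · exact absurd (hIatom.2 _ h) hne
      · exact h
    have heP : e ∈ P.asIdeal := by
      by_contra heP
      apply hP
      have hsing : ({P} : Set (PrimeSpectrum A)) = basicOpen e := by
        ext Q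
        simp only [Set.mem_singleton_iff, SetLike.mem_coe, mem_basicOpen]
        constructor
        · rintro rfl; exact heP
        · intro heQ
          by_contra hQP
          have hne' : ¬ Q.asIdeal ≤ P.asIdeal := fun hle =>
            hQP (PrimeSpectrum.ext ((prime_isMaximal hA _ Q.2).eq_of_le P.2.ne_top hle))
          obtain ⟨b, hbQ, hbP⟩ := SetLike.not_le_iff_exists.mp hne'
          have heI' : e ∈ I := heqI ▸ Ideal.mem_span_singleton_self e
          have hbe : b * e ∈ I := I.mul_mem_left b heI'
          have hbeP : b * e ∉ P.asIdeal := fun h => (P.2.mem_or_mem h).elim hbP heP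
          have hbe0 : b * e ≠ 0 := fun h => hbeP (h ▸ P.asIdeal.zero_mem)
          have h1 : Ideal.span {b * e} ≤ I := (Ideal.span_singleton_le_iff_mem _).mpr hbe
          have h1ne : Ideal.span {b * e} ≠ ⊥ := fun h =>
            hbe0 (by simpa [Ideal.span_singleton_eq_bot] using h)
          have h2 : Ideal.span {b * e} = I := by
            rcases h1.lt_or_eq with h | h
            · exact absurd (hIatom.2 _ h) h1ne
            · exact h
          have heSpan : e ∈ Ideal.span {b * e} := h2 ▸ heI'
          obtain ⟨c, hc⟩ := Ideal.mem_span_singleton'.mp heSpan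
          exact heQ (hc ▸ Q.asIdeal.mul_mem_left c (Q.asIdeal.mul_mem_right e hbQ))
      rw [hsing]
      exact (basicOpen e).2
    rw [← heqI]
    exact (Ideal.span_singleton_le_iff_mem _).mpr heP
  · intro a ha
    simp only [Ideal.mem_iInf] at ha
    obtain ⟨e, he, hspan⟩ := exists_idem_span hA a
    have hS_isolated : ∀ Q : PrimeSpectrum A,
        Q ∈ (basicOpen e : Set (PrimeSpectrum A)) → IsOpen ({Q} : Set (PrimeSpectrum A)) := by
      intro Q hQ
      by_contra hop
      have haQ : a ∈ Q.asIdeal := ha Q hop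
      have heQ : e ∈ Q.asIdeal := by
        have h1 : Ideal.span {a} ≤ Q.asIdeal := (Ideal.span_singleton_le_iff_mem _).mpr haQ
        rw [hspan] at h1
        exact h1 (Ideal.mem_span_singleton_self e)
      exact (mem_basicOpen e Q).mp hQ heQ
    have hcpt : IsCompact (basicOpen e : Set (PrimeSpectrum A)) :=
      (basicOpen_isClosed he).isCompact
    have hdisc : DiscreteTopology (basicOpen e : Set (PrimeSpectrum A)) := by
      rw [discreteTopology_iff_isOpen_singleton]
      rintro ⟨Q, hQ⟩
      have hps : ({(⟨Q, hQ⟩ : (basicOpen e : Set (PrimeSpectrum A)))} :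
          Set (basicOpen e : Set (PrimeSpectrum A))) = Subtype.val ⁻¹' {Q} := by
        ext R
        simp [Subtype.ext_iff]
      rw [hps]
      exact (hS_isolated Q hQ).preimage continuous_subtype_val
    have hfin : (basicOpen e : Set (PrimeSpectrum A)).Finite := hcpt.finite (isDiscrete_iff_discreteTopology.mpr hdisc)
    have hch : ∀ Q : PrimeSpectrum A, Q ∈ (basicOpen e : Set (PrimeSpectrum A)) →
        ∃ f : A, IsIdempotentElem f ∧ ({Q} : Set (PrimeSpectrum A)) = basicOpen f := by
      intro Q hQ
      exact exists_idempotent_basicOpen_eq_of_isClopen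
        ⟨(isClosed_singleton_iff_isMaximal Q).mpr (prime_isMaximal hA _ Q.2),
          hS_isolated Q hQ⟩
    choose! f hf1 hf2 using hch
    have hsoc : ∀ Q ∈ (basicOpen e : Set (PrimeSpectrum A)), f Q ∈ socleIdeal A := by
      intro Q hQ
      have hatom : IsAtom (Ideal.span {f Q}) :=
        isAtom_span_of_basicOpen_singleton hA (hf1 Q hQ) Q (hf2 Q hQ).symm
      have hle : Ideal.span {f Q} ≤ socleIdeal A :=
        le_sSup (by rw [Set.mem_setOf_eq, isSimpleModule_iff_isAtom]; exact hatom)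
      exact hle (Ideal.mem_span_singleton_self (f Q))
    set T := hfin.toFinset with hT
    have hker : e * ∏ Q ∈ T, (1 - f Q) = 0 := by
      apply idem_eq_zero_of_nilpotent
      · have hprod : IsIdempotentElem (∏ Q ∈ T, (1 - f Q)) := by
          apply Finset.prod_induction
          · intro x y hx hy
            show x * y * (x * y) = x * y
            calc x * y * (x * y) = (x * x) * (y * y) := by ring
            _ = x * y := by rw [hx, hy]
          · exact IsIdempotentElem.one
          · intro Q hQT
            exact (hf1 Q (hfin.mem_toFinset.mp hQT)).one_sub
        show (e * (∏ Q ∈ T, (1 - f Q))) * (e * (∏ Q ∈ T, (1 - f Q)))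
            = e * (∏ Q ∈ T, (1 - f Q))
        calc (e * (∏ Q ∈ T, (1 - f Q))) * (e * (∏ Q ∈ T, (1 - f Q)))
            = (e * e) * ((∏ Q ∈ T, (1 - f Q)) * (∏ Q ∈ T, (1 - f Q))) := by ring
        _ = e * (∏ Q ∈ T, (1 - f Q)) := by rw [he.eq, hprod.eq]
      · rw [← mem_nilradical, nilradical_eq_sInf, Ideal.mem_sInf]
        intro J hJ
        by_cases heJ : e ∈ J
        · exact J.mul_mem_right _ heJ
        · have hQmem : (⟨J, hJ⟩ : PrimeSpectrum A) ∈ (basicOpen e : Set (PrimeSpectrum A)) :=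
            (mem_basicOpen e _).mpr heJ
          set Q : PrimeSpectrum A := ⟨J, hJ⟩ with hQdef
          have hQT : Q ∈ T := hfin.mem_toFinset.mpr hQmem
          have hfQ : f Q ∉ J := by
            have : Q ∈ (basicOpen (f Q) : Set (PrimeSpectrum A)) := by
              rw [← hf2 Q hQmem]; rfl
            exact (mem_basicOpen _ _).mp this
          have h1f : 1 - f Q ∈ J := one_sub_mem_of_not_mem (hf1 Q hQmem) hJ hfQ
          have hdvd : (1 - f Q) ∣ ∏ R ∈ T, (1 - f R) := Finset.dvd_prod_of_mem _ hQT
          obtain ⟨c, hc⟩ := hdvd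
          have : (∏ R ∈ T, (1 - f R)) ∈ J := hc ▸ J.mul_mem_right c h1f
          exact J.mul_mem_left e this
    have hone : (1 : A) - ∏ Q ∈ T, (1 - f Q) ∈ socleIdeal A :=
      one_sub_prod_mem T f (socleIdeal A) fun Q hQT => hsoc Q (hfin.mem_toFinset.mp hQT)
    have heSoc : e ∈ socleIdeal A := by
      have heq : e = e * (1 - ∏ Q ∈ T, (1 - f Q)) := by
        rw [_root_.mul_sub, mul_one, hker, _root_.sub_zero]
      rw [heq]
      exact (socleIdeal A).mul_mem_left e hone
    have haSpan : a ∈ Ideal.span {e} := hspan ▸ Ideal.mem_span_singleton_self a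
    obtain ⟨c, hc⟩ := Ideal.mem_span_singleton'.mp haSpan
    rw [← hc]
    exact (socleIdeal A).mul_mem_left c heSoc
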